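/- The dimension of the standard module S_0(2m) of the affine symmetric TL algebra b^φ_{2m} (the module labelled l = 0, i.e. with no propagating lines) equals 2^m. -/

import Mathlib

/-!
STATEMENT 17.
The standard module `S₀(2m)` of the affine symmetric (symplectic blob) TL algebra
`b^φ_{2m}` has basis the set of upper half diagrams with no propagating lines; such a
half diagram is determined by a free binary (left/right) choice at each of the `m`
vertices of the fundamental domain.  Hence any `k`-vector space with basis indexed by
these half diagrams (e.g. `S₀(2m)`) has dimension `2^m`, and the number of such half
diagrams is `2^m`.
-/

/-- Destination of the line leaving a northern vertex of an affine symmetric half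
diagram (drawn in the fundamental strip between the `0`-wall and the `1`-wall):
it either forms a cup with another northern vertex (`pt j`), exits through the
`0`-wall (`wall0`), exits through the `1`-wall (`wall1`), or propagates to the
southern edge (`prop`). -/
inductive HDest : Type
  | pt (j : ℕ) : HDest
  | wall0 : HDest
  | wall1 : HDest
  | prop : HDest
deriving DecidableEq

/-- A half diagram on `m` northern vertices (the right-hand fundamental part of an
affine symmetric diagram). -/
structure HalfDiagram (m : ℕ) : Type where
  dest : ℕ → HDest

/-- Well-formedness (planarity) of a half diagram: cups are involutive and
non-crossing, every point under a cup is paired under that cup, and wall exits and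
propagating lines are compatible with planarity of the strip: `0`-wall exits lie to
the left of propagating lines, which lie to the left of `1`-wall exits. -/
def HWf (m : ℕ) (h : HalfDiagram m) : Prop :=
  (∀ i, m ≤ i → h.dest i = HDest.pt i) ∧
  (∀ i j, i < m → h.dest i = HDest.pt j → j < m ∧ j ≠ i ∧ h.dest j = HDest.pt i) ∧
  (∀ i j c, i < m → h.dest i = HDest.pt j → i < c → c < j →
    ∃ d, h.dest c = HDest.pt d ∧ i < d ∧ d < j) ∧
  (∀ i j, i < m → j < m → h.dest i = HDest.wall0 → h.dest j = HDest.prop → i < j) ∧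
  (∀ i j, i < m → j < m → h.dest i = HDest.prop → h.dest j = HDest.wall1 → i < j) ∧
  (∀ i j, i < m → j < m → h.dest i = HDest.wall0 → h.dest j = HDest.wall1 → i < j)
namespace Stmt17

/-! ### Height function -/

def ht (w : ℕ → Bool) : ℕ → ℤ
  | 0 => 0
  | n+1 => ht w n + (if w n then 1 else -1)

lemma ht_succ (w : ℕ → Bool) (n : ℕ) : ht w (n+1) = ht w n + (if w n then 1 else -1) := rfl

lemma ht_step (w : ℕ → Bool) (n : ℕ) : ht w (n+1) = ht w n + 1 ∨ ht w (n+1) = ht w n - 1 := by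
  rw [ht_succ]; cases hw : w n <;> simp <;> ring

lemma ht_succ_true {w : ℕ → Bool} {n : ℕ} (h : w n = true) : ht w (n+1) = ht w n + 1 := by
  rw [ht_succ]; simp [h]

lemma ht_succ_false {w : ℕ → Bool} {n : ℕ} (h : w n = false) : ht w (n+1) = ht w n - 1 := by
  rw [ht_succ]; simp [h]; ring

lemma w_true_of_ht {w : ℕ → Bool} {n : ℕ} (h : ht w n < ht w (n+1)) : w n = true := by
  cases hw : w n
  · rw [ht_succ_false hw] at h; omega
  · rfl

lemma w_false_of_ht {w : ℕ → Bool} {n : ℕ} (h : ht w (n+1) < ht w n) : w n = false := by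
  cases hw : w n
  · rfl
  · rw [ht_succ_true hw] at h; omega

lemma ivt_up (w : ℕ → Bool) (v : ℤ) :
    ∀ b a, a ≤ b → ht w a ≤ v → v ≤ ht w b → ∃ t, a ≤ t ∧ t ≤ b ∧ ht w t = v := by
  intro b
  induction b with
  | zero =>
    intro a ha h1 h2
    interval_cases a
    exact ⟨0, le_rfl, le_rfl, le_antisymm h1 h2⟩
  | succ b ih =>
    intro a ha h1 h2
    by_cases hv : ht w (b+1) = v
    · exact ⟨b+1, ha, le_rfl, hv⟩
    · have hstep := ht_step w b
      have hb : v ≤ ht w b := by omega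
      have ha' : a ≤ b := by
        rcases Nat.lt_or_ge a (b+1) with h | h
        · omega
        · exfalso
          have : a = b + 1 := by omega
          subst this; omega
      obtain ⟨t, h3, h4, h5⟩ := ih a ha' h1 hb
      exact ⟨t, h3, by omega, h5⟩

lemma ivt_down (w : ℕ → Bool) (v : ℤ) :
    ∀ b a, a ≤ b → v ≤ ht w a → ht w b ≤ v → ∃ t, a ≤ t ∧ t ≤ b ∧ ht w t = v := by
  intro b
  induction b with
  | zero =>
    intro a ha h1 h2
    interval_cases a
    exact ⟨0, le_rfl, le_rfl, le_antisymm h2 h1⟩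
  | succ b ih =>
    intro a ha h1 h2
    by_cases hv : ht w (b+1) = v
    · exact ⟨b+1, ha, le_rfl, hv⟩
    · have hstep := ht_step w b
      have hb : ht w b ≤ v := by omega
      have ha' : a ≤ b := by
        rcases Nat.lt_or_ge a (b+1) with h | h
        · omega
        · exfalso
          have : a = b + 1 := by omega
          subst this; omega
      obtain ⟨t, h3, h4, h5⟩ := ih a ha' h1 hb
      exact ⟨t, h3, by omega, h5⟩

lemma ht_eq_add_sum (w : ℕ → Bool) (s t : ℕ) (hst : s ≤ t) :
    ht w t = ht w s + ∑ c ∈ Finset.Ico s t, (if w c then (1:ℤ) else -1) := by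
  induction t, hst using Nat.le_induction with
  | base => simp
  | succ t hst ih =>
    rw [Finset.sum_Ico_succ_top (by omega), ht_succ, ih]
    ring

lemma sum_pm_eq (w : ℕ → Bool) (S : Finset ℕ) :
    ∑ c ∈ S, (if w c then (1:ℤ) else -1)
      = ((S.filter (fun c => w c = true)).card : ℤ)
        - ((S.filter (fun c => w c = false)).card : ℤ) := by
  classical
  have key : ∀ c, (if w c then (1:ℤ) else -1)
      = (if w c = true then (1:ℤ) else 0) - (if w c = false then (1:ℤ) else 0) := by
    intro c; cases w c <;> simp
  simp_rw [key]
  rw [Finset.sum_sub_distrib, Finset.sum_boole, Finset.sum_boole]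

lemma sum_pm_nonneg {w : ℕ → Bool} {S : Finset ℕ} (p : ℕ → ℕ)
    (hp : ∀ c ∈ S, w c = false → p c ∈ S ∧ w (p c) = true)
    (hinj : ∀ c₁ ∈ S, ∀ c₂ ∈ S, w c₁ = false → w c₂ = false → p c₁ = p c₂ → c₁ = c₂) :
    0 ≤ ∑ c ∈ S, (if w c then (1:ℤ) else -1) := by
  classical
  have hcard : (S.filter (fun c => w c = false)).card ≤ (S.filter (fun c => w c = true)).card := by
    apply Finset.card_le_card_of_injOn p
    · intro c hc
      simp only [Finset.coe_filter, Set.mem_setOf_eq, Finset.mem_coe, Finset.mem_filter] at hc ⊢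
      exact hp c hc.1 hc.2
    · intro c₁ h1 c₂ h2 he
      simp only [Finset.coe_filter, Set.mem_setOf_eq] at h1 h2
      exact hinj c₁ h1.1 c₂ h2.1 h1.2 h2.2 he
  rw [sum_pm_eq]
  have : ((S.filter (fun c => w c = false)).card : ℤ)
      ≤ ((S.filter (fun c => w c = true)).card : ℤ) := by exact_mod_cast hcard
  omega

lemma sum_pm_nonpos {w : ℕ → Bool} {S : Finset ℕ} (p : ℕ → ℕ)
    (hp : ∀ c ∈ S, w c = true → p c ∈ S ∧ w (p c) = false)
    (hinj : ∀ c₁ ∈ S, ∀ c₂ ∈ S, w c₁ = true → w c₂ = true → p c₁ = p c₂ → c₁ = c₂) :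
    ∑ c ∈ S, (if w c then (1:ℤ) else -1) ≤ 0 := by
  classical
  have hcard : (S.filter (fun c => w c = true)).card ≤ (S.filter (fun c => w c = false)).card := by
    apply Finset.card_le_card_of_injOn p
    · intro c hc
      simp only [Finset.coe_filter, Set.mem_setOf_eq, Finset.mem_coe, Finset.mem_filter] at hc ⊢
      exact hp c hc.1 hc.2
    · intro c₁ h1 c₂ h2 he
      simp only [Finset.coe_filter, Set.mem_setOf_eq] at h1 h2
      exact hinj c₁ h1.1 c₂ h2.1 h1.2 h2.2 he
  rw [sum_pm_eq]
  have : ((S.filter (fun c => w c = true)).card : ℤ)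
      ≤ ((S.filter (fun c => w c = false)).card : ℤ) := by exact_mod_cast hcard
  omega

/-! ### Decoding a word into a half diagram -/

open Classical in
noncomputable def decodeDest (m : ℕ) (w : ℕ → Bool) (i : ℕ) : HDest :=
  if i < m then
    if w i then
      if hex : ∃ j, i < j ∧ j < m ∧ ht w (j+1) = ht w i then HDest.pt (Nat.find hex)
      else HDest.wall1
    else
      if _hex : ∃ j, j ≤ i ∧ ht w j = ht w (i+1) then
        HDest.pt (Nat.findGreatest (fun j => ht w j = ht w (i+1)) i)
      else HDest.wall0
  else HDest.pt i

variable {m : ℕ} {w : ℕ → Bool}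

lemma decode_ge (i : ℕ) (h : m ≤ i) : decodeDest m w i = HDest.pt i := by
  unfold decodeDest
  rw [if_neg (by omega)]

open Classical in
lemma decode_true_pos {i : ℕ} (him : i < m) (hwi : w i = true)
    (hex : ∃ j, i < j ∧ j < m ∧ ht w (j+1) = ht w i) :
    decodeDest m w i = HDest.pt (Nat.find hex) := by
  unfold decodeDest
  rw [if_pos him, if_pos (by simp [hwi]), dif_pos hex]

open Classical in
lemma decode_true_neg {i : ℕ} (him : i < m) (hwi : w i = true)
    (hex : ¬ ∃ j, i < j ∧ j < m ∧ ht w (j+1) = ht w i) :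
    decodeDest m w i = HDest.wall1 := by
  unfold decodeDest
  rw [if_pos him, if_pos (by simp [hwi]), dif_neg hex]

open Classical in
lemma decode_false_pos {i : ℕ} (him : i < m) (hwi : w i = false)
    (hex : ∃ j, j ≤ i ∧ ht w j = ht w (i+1)) :
    decodeDest m w i
      = HDest.pt (Nat.findGreatest (fun j => ht w j = ht w (i+1)) i) := by
  unfold decodeDest
  rw [if_pos him, if_neg (by simp [hwi]), dif_pos hex]

open Classical in
lemma decode_false_neg {i : ℕ} (him : i < m) (hwi : w i = false)
    (hex : ¬ ∃ j, j ≤ i ∧ ht w j = ht w (i+1)) :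
    decodeDest m w i = HDest.wall0 := by
  unfold decodeDest
  rw [if_pos him, if_neg (by simp [hwi]), dif_neg hex]

lemma decode_ne_prop (i : ℕ) : decodeDest m w i ≠ HDest.prop := by
  unfold decodeDest
  split
  · split
    · split <;> simp
    · split <;> simp
  · simp

/-- Interior bound for a matched opener. -/
lemma opener_interior {i j : ℕ} (hij : i < j) (hwi : w i = true)
    (hmin : ∀ j', i < j' → j' < j → ht w (j'+1) ≠ ht w i) :
    ∀ t, i < t → t ≤ j → ht w i < ht w t := by
  intro t
  induction t with
  | zero => omega
  | succ t iht =>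
    intro h1 h2
    rcases Nat.lt_or_ge i t with hit | hit
    · have ht' : ht w i < ht w t := iht hit (by omega)
      rcases ht_step w t with hs | hs
      · omega
      · by_cases he : ht w (t+1) = ht w i
        · exact absurd he (hmin t hit (by omega))
        · omega
    · have : t = i := by omega
      subst this
      rw [ht_succ_true hwi]; omega

/-- Interior bound for a matched closer. -/
lemma closer_interior {i g : ℕ} (hwi : w i = false)
    (hg : ht w g = ht w (i+1))
    (hmax : ∀ t, g < t → t ≤ i → ht w t ≠ ht w (i+1)) :
    ∀ t, g < t → t ≤ i → ht w (i+1) < ht w t := by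
  intro t h1 h2
  have hii : ht w i = ht w (i+1) + 1 := by rw [ht_succ_false hwi]; ring
  by_contra hcon
  push_neg at hcon
  have hne := hmax t h1 h2
  have hlt : ht w t < ht w (i+1) := lt_of_le_of_ne hcon hne
  obtain ⟨s, hs1, hs2, hs3⟩ := ivt_up w (ht w (i+1)) i t (by omega) (by omega) (by omega)
  exact hmax s (by omega) hs2 hs3

lemma closer_partner_lt {i g : ℕ} (hgi : g ≤ i) (hwi : w i = false)
    (hg : ht w g = ht w (i+1)) : g < i := by
  have hii : ht w i = ht w (i+1) + 1 := by rw [ht_succ_false hwi]; ring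
  rcases Nat.lt_or_ge g i with h | h
  · exact h
  · exfalso
    have : g = i := by omega
    subst this; omega

lemma closer_partner_true {i g : ℕ} (hgi : g ≤ i) (hwi : w i = false)
    (hg : ht w g = ht w (i+1))
    (hmax : ∀ t, g < t → t ≤ i → ht w t ≠ ht w (i+1)) : w g = true := by
  have hgi' := closer_partner_lt hgi hwi hg
  have := closer_interior hwi hg hmax (g+1) (by omega) (by omega)
  exact w_true_of_ht (by omega)

/-- An opener with no return stays strictly below all later heights. -/
lemma wall1_interior {i : ℕ} (hwi : w i = true)
    (hex : ¬ ∃ j, i < j ∧ j < m ∧ ht w (j+1) = ht w i) :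
    ∀ t, i < t → t ≤ m → ht w i < ht w t := by
  push_neg at hex
  intro t
  induction t with
  | zero => omega
  | succ t iht =>
    intro h1 h2
    rcases Nat.lt_or_ge i t with hit | hit
    · have ht' : ht w i < ht w t := iht hit (by omega)
      rcases ht_step w t with hs | hs
      · omega
      · by_cases he : ht w (t+1) = ht w i
        · exact absurd he (hex t hit (by omega))
        · omega
    · have : t = i := by omega
      subst this
      rw [ht_succ_true hwi]; omega

/-- A closer with no earlier matching height is a new minimum. -/
lemma wall0_interior {i : ℕ} (hwi : w i = false)
    (hex : ¬ ∃ j, j ≤ i ∧ ht w j = ht w (i+1)) :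
    ∀ t, t ≤ i → ht w (i+1) < ht w t := by
  push_neg at hex
  intro t hti
  have hii : ht w i = ht w (i+1) + 1 := by rw [ht_succ_false hwi]; ring
  by_contra hcon
  push_neg at hcon
  have hne := hex t hti
  have hlt : ht w t < ht w (i+1) := lt_of_le_of_ne hcon hne
  obtain ⟨s, _, hs2, hs3⟩ := ivt_up w (ht w (i+1)) i t (by omega) (by omega) (by omega)
  exact hex s hs2 hs3

/-! ### The decoded diagram is well-formed -/

open Classical in
lemma decode_involutive {i j : ℕ} (him : i < m)
    (hd : decodeDest m w i = HDest.pt j) :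
    j < m ∧ j ≠ i ∧ decodeDest m w j = HDest.pt i := by
  cases hwi : w i with
  | true =>
    by_cases hex : ∃ j, i < j ∧ j < m ∧ ht w (j+1) = ht w i
    · rw [decode_true_pos him hwi hex] at hd
      have hj : Nat.find hex = j := by injection hd
      obtain ⟨hij, hjm, hret⟩ : i < j ∧ j < m ∧ ht w (j+1) = ht w i := hj ▸ Nat.find_spec hex
      have hmin : ∀ j', i < j' → j' < j → ht w (j'+1) ≠ ht w i := by
        intro j' h1 h2 hne
        exact Nat.find_min hex (by omega) ⟨h1, by omega, hne⟩
      have hint := opener_interior hij hwi hmin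
      have hwj : w j = false := w_false_of_ht (by
        have := hint j hij le_rfl; omega)
      have hexj : ∃ t, t ≤ j ∧ ht w t = ht w (j+1) := ⟨i, le_of_lt hij, hret.symm⟩
      rw [decode_false_pos hjm hwj hexj]
      refine ⟨hjm, by omega, ?_⟩
      congr 1
      have hPi : ht w i = ht w (j+1) := hret.symm
      have h1 : i ≤ Nat.findGreatest (fun t => ht w t = ht w (j+1)) j :=
        Nat.le_findGreatest (le_of_lt hij) hPi
      have h2 : Nat.findGreatest (fun t => ht w t = ht w (j+1)) j ≤ j :=
        Nat.findGreatest_le j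
      have hPg : ht w (Nat.findGreatest (fun t => ht w t = ht w (j+1)) j) = ht w (j+1) :=
        Nat.findGreatest_spec (P := fun t => ht w t = ht w (j+1)) (le_of_lt hij) hPi
      by_contra hne
      have hgi : i < Nat.findGreatest (fun t => ht w t = ht w (j+1)) j := by
        omega
      have := hint _ hgi h2
      rw [hPg, hret] at this
      omega
    · rw [decode_true_neg him hwi hex] at hd
      exact absurd hd (by simp)
  | false =>
    by_cases hex : ∃ t, t ≤ i ∧ ht w t = ht w (i+1)
    · rw [decode_false_pos him hwi hex] at hd
      have hj : Nat.findGreatest (fun t => ht w t = ht w (i+1)) i = j := by injection hd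
      obtain ⟨t0, ht0, hP0⟩ := hex
      have spec : ht w j = ht w (i+1) :=
        hj ▸ Nat.findGreatest_spec (P := fun t => ht w t = ht w (i+1)) ht0 hP0
      have hle : j ≤ i := hj ▸ Nat.findGreatest_le i
      have hmax : ∀ t, j < t → t ≤ i → ht w t ≠ ht w (i+1) := by
        intro t h1 h2
        exact Nat.findGreatest_is_greatest (P := fun t => ht w t = ht w (i+1)) (by omega) h2
      have hji : j < i := closer_partner_lt hle hwi spec
      have hwj : w j = true := closer_partner_true hle hwi spec hmax
      have hexj : ∃ j', j < j' ∧ j' < m ∧ ht w (j'+1) = ht w j := ⟨i, hji, him, spec.symm⟩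
      rw [decode_true_pos (by omega) hwj hexj]
      refine ⟨by omega, by omega, ?_⟩
      congr 1
      obtain ⟨hf1, hf2, hf3⟩ := Nat.find_spec hexj
      have hfle : Nat.find hexj ≤ i := Nat.find_le ⟨hji, him, spec.symm⟩
      by_contra hne
      have hflt : Nat.find hexj < i := by omega
      have := closer_interior hwi spec hmax (Nat.find hexj + 1) (by omega) (by omega)
      rw [hf3, spec] at this
      omega
    · rw [decode_false_neg him hwi hex] at hd
      exact absurd hd (by simp)

open Classical in
lemma decode_noncross {i j c : ℕ} (him : i < m)
    (hd : decodeDest m w i = HDest.pt j) (hic : i < c) (hcj : c < j) :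
    ∃ d, decodeDest m w c = HDest.pt d ∧ i < d ∧ d < j := by
  cases hwi : w i with
  | true =>
    by_cases hex : ∃ j, i < j ∧ j < m ∧ ht w (j+1) = ht w i
    · rw [decode_true_pos him hwi hex] at hd
      have hj : Nat.find hex = j := by injection hd
      obtain ⟨hij, hjm, hret⟩ : i < j ∧ j < m ∧ ht w (j+1) = ht w i := hj ▸ Nat.find_spec hex
      have hmin : ∀ j', i < j' → j' < j → ht w (j'+1) ≠ ht w i := by
        intro j' h1 h2 hne
        exact Nat.find_min hex (by omega) ⟨h1, by omega, hne⟩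
      have hint := opener_interior hij hwi hmin
      have hcm : c < m := by omega
      have hhc : ht w i < ht w c := hint c hic (by omega)
      cases hwc : w c with
      | true =>
        have hc1 : ht w (c+1) = ht w c + 1 := ht_succ_true hwc
        obtain ⟨t, hs1, hs2, hs3⟩ :=
          ivt_down w (ht w c) (j+1) (c+1) (by omega) (by omega) (by omega)
        have htne : t ≠ c + 1 := by
          intro hh; rw [hh] at hs3; omega
        have hexc : ∃ j', c < j' ∧ j' < m ∧ ht w (j'+1) = ht w c :=
          ⟨t - 1, by omega, by omega, by rwa [show t - 1 + 1 = t by omega]⟩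
        rw [decode_true_pos hcm hwc hexc]
        obtain ⟨hd1, hd2, hd3⟩ := Nat.find_spec hexc
        have hdle : Nat.find hexc ≤ t - 1 :=
          Nat.find_le ⟨by omega, by omega, by rwa [show t - 1 + 1 = t by omega]⟩
        have hdj : Nat.find hexc ≠ j := by
          intro hh
          rw [hh, hret] at hd3
          omega
        exact ⟨Nat.find hexc, rfl, by omega, by omega⟩
      | false =>
        have hc1 : ht w (c+1) = ht w c - 1 := ht_succ_false hwc
        have hi1 : ht w (i+1) = ht w i + 1 := ht_succ_true hwi
        have hhc1 : ht w i < ht w (c+1) := hint (c+1) (by omega) (by omega)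
        obtain ⟨t, hs1, hs2, hs3⟩ :=
          ivt_up w (ht w (c+1)) c (i+1) (by omega) (by omega) (by omega)
        have hexc : ∃ t, t ≤ c ∧ ht w t = ht w (c+1) := ⟨t, hs2, hs3⟩
        rw [decode_false_pos hcm hwc hexc]
        have hg1 : t ≤ Nat.findGreatest (fun s => ht w s = ht w (c+1)) c :=
          Nat.le_findGreatest hs2 hs3
        have hg2 : Nat.findGreatest (fun s => ht w s = ht w (c+1)) c ≤ c :=
          Nat.findGreatest_le c
        have hPg : ht w (Nat.findGreatest (fun s => ht w s = ht w (c+1)) c) = ht w (c+1) :=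
          Nat.findGreatest_spec (P := fun s => ht w s = ht w (c+1)) hs2 hs3
        have hgc : Nat.findGreatest (fun s => ht w s = ht w (c+1)) c ≠ c := by
          intro hh
          rw [hh] at hPg
          omega
        exact ⟨_, rfl, by omega, by omega⟩
    · rw [decode_true_neg him hwi hex] at hd
      exact absurd hd (by simp)
  | false =>
    by_cases hex : ∃ t, t ≤ i ∧ ht w t = ht w (i+1)
    · rw [decode_false_pos him hwi hex] at hd
      have hj : Nat.findGreatest (fun t => ht w t = ht w (i+1)) i = j := by injection hd
      have hle : j ≤ i := hj ▸ Nat.findGreatest_le i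
      omega
    · rw [decode_false_neg him hwi hex] at hd
      exact absurd hd (by simp)

lemma decode_walls {i j : ℕ} (him : i < m) (hjm : j < m)
    (h0 : decodeDest m w i = HDest.wall0) (h1 : decodeDest m w j = HDest.wall1) :
    i < j := by
  classical
  have hwi : w i = false := by
    cases hwi : w i with
    | false => rfl
    | true =>
      exfalso
      by_cases hex : ∃ j, i < j ∧ j < m ∧ ht w (j+1) = ht w i
      · rw [decode_true_pos him hwi hex] at h0; exact absurd h0 (by simp)
      · rw [decode_true_neg him hwi hex] at h0; exact absurd h0 (by simp)
  have hexi : ¬ ∃ t, t ≤ i ∧ ht w t = ht w (i+1) := by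
    intro hex
    rw [decode_false_pos him hwi hex] at h0
    exact absurd h0 (by simp)
  have hwj : w j = true := by
    cases hwj : w j with
    | true => rfl
    | false =>
      exfalso
      by_cases hex : ∃ t, t ≤ j ∧ ht w t = ht w (j+1)
      · rw [decode_false_pos hjm hwj hex] at h1; exact absurd h1 (by simp)
      · rw [decode_false_neg hjm hwj hex] at h1; exact absurd h1 (by simp)
  have hexj : ¬ ∃ j', j < j' ∧ j' < m ∧ ht w (j'+1) = ht w j := by
    intro hex
    rw [decode_true_pos hjm hwj hex] at h1
    exact absurd h1 (by simp)
  have hne : i ≠ j := by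
    intro hh; rw [hh, hwj] at hwi; exact absurd hwi (by simp)
  by_contra hcon
  push_neg at hcon
  have hji : j < i := by omega
  have hb0 := wall0_interior hwi hexi j (by omega)
  have hb1 := wall1_interior hwj hexj (i+1) (by omega) (by omega)
  omega

noncomputable def decodeHD (m : ℕ) (w : ℕ → Bool) : HalfDiagram m := ⟨decodeDest m w⟩

lemma decode_wf : HWf m (decodeHD m w) := by
  refine ⟨fun i hi => decode_ge i hi,
    fun i j him hd => decode_involutive him hd,
    fun i j c him hd hic hcj => decode_noncross him hd hic hcj,
    fun i j _ hjm _ hp => absurd hp (decode_ne_prop j),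
    fun i j him _ hp _ => absurd hp (decode_ne_prop i),
    fun i j him hjm h0 h1 => decode_walls him hjm h0 h1⟩

/-! ### Encoding a diagram as a word -/

def toWord (m : ℕ) (h : HalfDiagram m) : ℕ → Bool := fun n =>
  if n < m then
    match h.dest n with
    | HDest.pt j => decide (n < j)
    | HDest.wall1 => true
    | _ => false
  else false

def ptOf (h : HalfDiagram m) (c : ℕ) : ℕ :=
  match h.dest c with
  | HDest.pt d => d
  | _ => 0

variable {h : HalfDiagram m}

lemma tw_pt {i j : ℕ} (him : i < m) (hd : h.dest i = HDest.pt j) :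
    toWord m h i = decide (i < j) := by
  simp [toWord, him, hd]

lemma tw_w0 {i : ℕ} (him : i < m) (hd : h.dest i = HDest.wall0) :
    toWord m h i = false := by
  simp [toWord, him, hd]

lemma tw_w1 {i : ℕ} (him : i < m) (hd : h.dest i = HDest.wall1) :
    toWord m h i = true := by
  simp [toWord, him, hd]

lemma tw_prop {i : ℕ} (hd : h.dest i = HDest.prop) :
    toWord m h i = false := by
  unfold toWord
  split
  · rw [hd]
  · rfl

section Encode

/-- Under a cup, every point is matched within the cup. -/
lemma cup_key (hwf : HWf m h) {i j c : ℕ} (him : i < m) (hd : h.dest i = HDest.pt j)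
    (hic : i < c) (hcj : c < j) :
    h.dest c = HDest.pt (ptOf h c) ∧ i < ptOf h c ∧ ptOf h c < j ∧ ptOf h c ≠ c ∧
      ptOf h c < m ∧ h.dest (ptOf h c) = HDest.pt c := by
  obtain ⟨h1, h2, h3, h4, h5, h6⟩ := hwf
  obtain ⟨d, hdc, hid, hdj⟩ := h3 i j c him hd hic hcj
  have hcm : c < m := lt_trans hcj (h2 i j him hd).1
  obtain ⟨hdm, hdnec, hdc'⟩ := h2 c d hcm hdc
  have hpt : ptOf h c = d := by simp [ptOf, hdc]
  rw [hpt]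
  exact ⟨hdc, hid, hdj, hdnec, hdm, hdc'⟩

/-- A true bit left of a `wall0` exit is a cup opener closing before the exit. -/
lemma wall0_key (hwf : HWf m h) {i c : ℕ} (him : i < m) (hd : h.dest i = HDest.wall0)
    (hci : c < i) (hwc : toWord m h c = true) :
    h.dest c = HDest.pt (ptOf h c) ∧ c < ptOf h c ∧ ptOf h c < i ∧
      ptOf h c < m ∧ h.dest (ptOf h c) = HDest.pt c := by
  obtain ⟨h1, h2, h3, h4, h5, h6⟩ := hwf
  have hcm : c < m := by omega
  rcases hc' : h.dest c with d | _ | _ | _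
  · have hbit : toWord m h c = decide (c < d) := tw_pt hcm hc'
    rw [hbit] at hwc
    have hcd : c < d := by simpa using hwc
    obtain ⟨hdm, hdnec, hdc'⟩ := h2 c d hcm hc'
    have hdi : d ≠ i := by
      intro hh; rw [hh] at hdc'; rw [hdc'] at hd; exact absurd hd (by simp)
    have hdlt : d < i := by
      rcases Nat.lt_or_ge d i with hlt | hge
      · exact hlt
      · exfalso
        obtain ⟨e, he, _, _⟩ := h3 c d i hcm hc' hci (by omega)
        rw [he] at hd; exact absurd hd (by simp)
    have hpt : ptOf h c = d := by simp [ptOf, hc']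
    rw [hpt]
    exact ⟨rfl, hcd, hdlt, hdm, hdc'⟩
  · rw [tw_w0 hcm hc'] at hwc; exact absurd hwc (by simp)
  · exact absurd (h6 i c him hcm hd hc') (by omega)
  · rw [tw_prop hc'] at hwc; exact absurd hwc (by simp)

/-- A false bit right of a `wall1` exit is a cup closer opening after the exit. -/
lemma wall1_key (hwf : HWf m h) (hnp : ∀ i, i < m → h.dest i ≠ HDest.prop)
    {j c : ℕ} (hjm : j < m) (hcm : c < m) (hd : h.dest j = HDest.wall1)
    (hjc : j < c) (hwc : toWord m h c = false) :
    h.dest c = HDest.pt (ptOf h c) ∧ ptOf h c < c ∧ j < ptOf h c ∧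
      ptOf h c < m ∧ h.dest (ptOf h c) = HDest.pt c := by
  obtain ⟨h1, h2, h3, h4, h5, h6⟩ := hwf
  rcases hc' : h.dest c with d | _ | _ | _
  · have hbit : toWord m h c = decide (c < d) := tw_pt hcm hc'
    rw [hbit] at hwc
    have hcd : ¬ (c < d) := by simpa using hwc
    obtain ⟨hdm, hdnec, hdc'⟩ := h2 c d hcm hc'
    have hdlt : d < c := by omega
    have hdj : d ≠ j := by
      intro hh; rw [hh] at hdc'
      rw [hdc'] at hd; exact absurd hd (by simp)
    have hjd : j < d := by
      rcases Nat.lt_or_ge j d with hlt | hge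
      · exact hlt
      · exfalso
        obtain ⟨e, he, _, _⟩ := h3 d c j hdm hdc' (by omega) hjc
        rw [he] at hd; exact absurd hd (by simp)
    have hpt : ptOf h c = d := by simp [ptOf, hc']
    rw [hpt]
    exact ⟨rfl, hdlt, hjd, hdm, hdc'⟩
  · exact absurd (h6 c j hcm hjm hc' hd) (by omega)
  · rw [tw_w1 hcm hc'] at hwc; exact absurd hwc (by simp)
  · exact absurd hc' (hnp c hcm)

/-- Interior bound for a cup of a well-formed diagram. -/
lemma cup_interior (hwf : HWf m h) {i j : ℕ} (him : i < m) (hij : i < j)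
    (hd : h.dest i = HDest.pt j) :
    ∀ t, i < t → t ≤ j → ht (toWord m h) i < ht (toWord m h) t := by
  intro t hit htj
  have hjm : j < m := (hwf.2.1 i j him hd).1
  have hwi : toWord m h i = true := by rw [tw_pt him hd]; simp [hij]
  have hsum := ht_eq_add_sum (toWord m h) (i+1) t (by omega)
  have hstep : ht (toWord m h) (i+1) = ht (toWord m h) i + 1 := ht_succ_true hwi
  have hnn : 0 ≤ ∑ c ∈ Finset.Ico (i+1) t, (if toWord m h c then (1:ℤ) else -1) := by
    apply sum_pm_nonneg (ptOf h)
    · intro c hc hwc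
      rw [Finset.mem_Ico] at hc
      obtain ⟨hdc, hid, hdj, hne, hdm, hrev⟩ := cup_key hwf him hd (c := c) (by omega) (by omega)
      have hcm : c < m := by omega
      rw [tw_pt hcm hdc] at hwc
      have hlt : ptOf h c < c := by
        have : ¬ (c < ptOf h c) := by simpa using hwc
        omega
      refine ⟨by rw [Finset.mem_Ico]; omega, ?_⟩
      rw [tw_pt hdm hrev]; simp [hlt]
    · intro c₁ hc1 c₂ hc2 hw1 hw2 heq
      rw [Finset.mem_Ico] at hc1 hc2
      obtain ⟨_, _, _, _, _, hrev1⟩ := cup_key hwf him hd (c := c₁) (by omega) (by omega)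
      obtain ⟨_, _, _, _, _, hrev2⟩ := cup_key hwf him hd (c := c₂) (by omega) (by omega)
      rw [heq] at hrev1
      rw [hrev1] at hrev2
      injection hrev2
  omega

/-- Exact return for a cup of a well-formed diagram. -/
lemma cup_return (hwf : HWf m h) {i j : ℕ} (him : i < m) (hij : i < j)
    (hd : h.dest i = HDest.pt j) :
    ht (toWord m h) (j+1) = ht (toWord m h) i := by
  have hjm : j < m := (hwf.2.1 i j him hd).1
  have hji : h.dest j = HDest.pt i := (hwf.2.1 i j him hd).2.2
  have hwi : toWord m h i = true := by rw [tw_pt him hd]; simp [hij]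
  have hwj : toWord m h j = false := by rw [tw_pt hjm hji]; simp; omega
  have hsum := ht_eq_add_sum (toWord m h) (i+1) (j+1) (by omega)
  have hstep : ht (toWord m h) (i+1) = ht (toWord m h) i + 1 := ht_succ_true hwi
  rw [Finset.sum_Ico_succ_top (by omega), hwj] at hsum
  have hzero : ∑ c ∈ Finset.Ico (i+1) j, (if toWord m h c then (1:ℤ) else -1) = 0 := by
    apply le_antisymm
    · apply sum_pm_nonpos (ptOf h)
      · intro c hc hwc
        rw [Finset.mem_Ico] at hc
        obtain ⟨hdc, hid, hdj, hne, hdm, hrev⟩ := cup_key hwf him hd (c := c) (by omega) (by omega)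
        have hcm : c < m := by omega
        rw [tw_pt hcm hdc] at hwc
        have hlt : c < ptOf h c := by simpa using hwc
        refine ⟨by rw [Finset.mem_Ico]; omega, ?_⟩
        rw [tw_pt hdm hrev]; simp; omega
      · intro c₁ hc1 c₂ hc2 hw1 hw2 heq
        rw [Finset.mem_Ico] at hc1 hc2
        obtain ⟨_, _, _, _, _, hrev1⟩ := cup_key hwf him hd (c := c₁) (by omega) (by omega)
        obtain ⟨_, _, _, _, _, hrev2⟩ := cup_key hwf him hd (c := c₂) (by omega) (by omega)
        rw [heq] at hrev1
        rw [hrev1] at hrev2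
        injection hrev2
    · apply sum_pm_nonneg (ptOf h)
      · intro c hc hwc
        rw [Finset.mem_Ico] at hc
        obtain ⟨hdc, hid, hdj, hne, hdm, hrev⟩ := cup_key hwf him hd (c := c) (by omega) (by omega)
        have hcm : c < m := by omega
        rw [tw_pt hcm hdc] at hwc
        have hlt : ptOf h c < c := by
          have : ¬ (c < ptOf h c) := by simpa using hwc
          omega
        refine ⟨by rw [Finset.mem_Ico]; omega, ?_⟩
        rw [tw_pt hdm hrev]; simp [hlt]
      · intro c₁ hc1 c₂ hc2 hw1 hw2 heq
        rw [Finset.mem_Ico] at hc1 hc2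
        obtain ⟨_, _, _, _, _, hrev1⟩ := cup_key hwf him hd (c := c₁) (by omega) (by omega)
        obtain ⟨_, _, _, _, _, hrev2⟩ := cup_key hwf him hd (c := c₂) (by omega) (by omega)
        rw [heq] at hrev1
        rw [hrev1] at hrev2
        injection hrev2
  rw [hzero] at hsum
  norm_num at hsum
  omega

lemma wall0_bound (hwf : HWf m h) {i : ℕ} (him : i < m) (hd : h.dest i = HDest.wall0) :
    ∀ t, t ≤ i → ht (toWord m h) (i+1) < ht (toWord m h) t := by
  intro t hti
  have hwi : toWord m h i = false := tw_w0 him hd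
  have hsum := ht_eq_add_sum (toWord m h) t (i+1) (by omega)
  rw [Finset.sum_Ico_succ_top (by omega), hwi] at hsum
  norm_num at hsum
  have hnp' : ∑ c ∈ Finset.Ico t i, (if toWord m h c then (1:ℤ) else -1) ≤ 0 := by
    apply sum_pm_nonpos (ptOf h)
    · intro c hc hwc
      rw [Finset.mem_Ico] at hc
      obtain ⟨hdc, hcd, hdi, hdm, hrev⟩ := wall0_key hwf him hd (by omega) hwc
      refine ⟨by rw [Finset.mem_Ico]; omega, ?_⟩
      rw [tw_pt hdm hrev]; simp; omega
    · intro c₁ hc1 c₂ hc2 hw1 hw2 heq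
      rw [Finset.mem_Ico] at hc1 hc2
      obtain ⟨_, _, _, _, hrev1⟩ := wall0_key hwf him hd (c := c₁) (by omega) hw1
      obtain ⟨_, _, _, _, hrev2⟩ := wall0_key hwf him hd (c := c₂) (by omega) hw2
      rw [heq] at hrev1
      rw [hrev1] at hrev2
      injection hrev2
  omega

lemma wall1_bound (hwf : HWf m h) (hnp : ∀ i, i < m → h.dest i ≠ HDest.prop)
    {j : ℕ} (hjm : j < m) (hd : h.dest j = HDest.wall1) :
    ∀ t, j < t → t ≤ m → ht (toWord m h) j < ht (toWord m h) t := by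
  intro t hjt htm
  have hwj : toWord m h j = true := tw_w1 hjm hd
  have hstep : ht (toWord m h) (j+1) = ht (toWord m h) j + 1 := ht_succ_true hwj
  have hsum := ht_eq_add_sum (toWord m h) (j+1) t (by omega)
  have hnn : 0 ≤ ∑ c ∈ Finset.Ico (j+1) t, (if toWord m h c then (1:ℤ) else -1) := by
    apply sum_pm_nonneg (ptOf h)
    · intro c hc hwc
      rw [Finset.mem_Ico] at hc
      obtain ⟨hdc, hdc2, hjd, hdm, hrev⟩ :=
        wall1_key hwf hnp hjm (by omega) hd (by omega) hwc
      refine ⟨by rw [Finset.mem_Ico]; omega, ?_⟩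
      rw [tw_pt hdm hrev]; simp; omega
    · intro c₁ hc1 c₂ hc2 hw1 hw2 heq
      rw [Finset.mem_Ico] at hc1 hc2
      obtain ⟨_, _, _, _, hrev1⟩ := wall1_key hwf hnp hjm (c := c₁) (by omega) hd (by omega) hw1
      obtain ⟨_, _, _, _, hrev2⟩ := wall1_key hwf hnp hjm (c := c₂) (by omega) hd (by omega) hw2
      rw [heq] at hrev1
      rw [hrev1] at hrev2
      injection hrev2
  omega

open Classical in
/-- Decoding the encoding of a well-formed diagram gives back the diagram. -/
lemma decode_toWord (hwf : HWf m h) (hnp : ∀ i, i < m → h.dest i ≠ HDest.prop) :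
    ∀ i, decodeDest m (toWord m h) i = h.dest i := by
  intro i
  rcases Nat.lt_or_ge i m with him | him
  swap
  · rw [decode_ge i him, hwf.1 i him]
  rcases hdi : h.dest i with j | _ | _ | _
  · rcases lt_trichotomy i j with hij | hij | hij
    · obtain ⟨hjm, hne, hji⟩ := hwf.2.1 i j him hdi
      have hwi : toWord m h i = true := by rw [tw_pt him hdi]; simp [hij]
      have hex : ∃ j', i < j' ∧ j' < m ∧ ht (toWord m h) (j'+1) = ht (toWord m h) i :=
        ⟨j, hij, hjm, cup_return hwf him hij hdi⟩
      rw [decode_true_pos him hwi hex]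
      congr 1
      have hint := cup_interior hwf him hij hdi
      have hfle : Nat.find hex ≤ j := Nat.find_le ⟨hij, hjm, cup_return hwf him hij hdi⟩
      obtain ⟨hf1, hf2, hf3⟩ := Nat.find_spec hex
      by_contra hne'
      have hflt : Nat.find hex < j := by omega
      have := hint (Nat.find hex + 1) (by omega) (by omega)
      omega
    · obtain ⟨_, hne, _⟩ := hwf.2.1 i j him hdi
      omega
    · obtain ⟨hjm, hne, hji⟩ := hwf.2.1 i j him hdi
      have hwi : toWord m h i = false := by rw [tw_pt him hdi]; simp; omega
      have hret : ht (toWord m h) (i+1) = ht (toWord m h) j := cup_return hwf hjm hij hji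
      have hex : ∃ t, t ≤ i ∧ ht (toWord m h) t = ht (toWord m h) (i+1) :=
        ⟨j, by omega, hret.symm⟩
      rw [decode_false_pos him hwi hex]
      congr 1
      have hint := cup_interior hwf hjm hij hji
      have hg1 : j ≤ Nat.findGreatest
          (fun t => ht (toWord m h) t = ht (toWord m h) (i+1)) i :=
        Nat.le_findGreatest (by omega) hret.symm
      have hg2 : Nat.findGreatest
          (fun t => ht (toWord m h) t = ht (toWord m h) (i+1)) i ≤ i :=
        Nat.findGreatest_le i
      have hPg : ht (toWord m h)
          (Nat.findGreatest (fun t => ht (toWord m h) t = ht (toWord m h) (i+1)) i)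
          = ht (toWord m h) (i+1) :=
        Nat.findGreatest_spec
          (P := fun t => ht (toWord m h) t = ht (toWord m h) (i+1)) (by omega) hret.symm
      by_contra hne'
      have := hint _ (by omega) hg2
      omega
  · have hwi : toWord m h i = false := tw_w0 him hdi
    have hex : ¬ ∃ t, t ≤ i ∧ ht (toWord m h) t = ht (toWord m h) (i+1) := by
      rintro ⟨t, ht1, ht2⟩
      have := wall0_bound hwf him hdi t ht1
      omega
    rw [decode_false_neg him hwi hex]
  · have hwi : toWord m h i = true := tw_w1 him hdi
    have hex : ¬ ∃ j', i < j' ∧ j' < m ∧ ht (toWord m h) (j'+1) = ht (toWord m h) i := by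
      rintro ⟨j', hj1, hj2, hj3⟩
      have := wall1_bound hwf hnp him hdi (j'+1) (by omega) (by omega)
      omega
    rw [decode_true_neg him hwi hex]
  · exact absurd hdi (hnp i him)

end Encode

open Classical in
/-- Encoding the decoding of a word gives back the word (below `m`). -/
lemma toWord_decode (w : ℕ → Bool) {i : ℕ} (him : i < m) :
    toWord m (decodeHD m w) i = w i := by
  have hdd : (decodeHD m w).dest i = decodeDest m w i := rfl
  cases hwi : w i with
  | true =>
    by_cases hex : ∃ j, i < j ∧ j < m ∧ ht w (j+1) = ht w i
    · have hpt := decode_true_pos him hwi hex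
      have hgt : i < Nat.find hex := (Nat.find_spec hex).1
      simp [toWord, him, hdd, hpt, hgt]
    · have hpt := decode_true_neg him hwi hex
      simp [toWord, him, hdd, hpt]
  | false =>
    by_cases hex : ∃ t, t ≤ i ∧ ht w t = ht w (i+1)
    · have hpt := decode_false_pos him hwi hex
      have hle : Nat.findGreatest (fun t => ht w t = ht w (i+1)) i ≤ i :=
        Nat.findGreatest_le i
      simp [toWord, him, hdd, hpt]
      omega
    · have hpt := decode_false_neg him hwi hex
      simp [toWord, him, hdd, hpt]

/-- The equivalence between well-formed half diagrams without propagating lines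
and binary words of length `m`. -/
noncomputable def theEquiv (m : ℕ) :
    {h : HalfDiagram m // HWf m h ∧ ∀ i, i < m → h.dest i ≠ HDest.prop}
      ≃ (Fin m → Bool) where
  toFun h := fun i => toWord m h.val i
  invFun v := ⟨decodeHD m (fun n => if hn : n < m then v ⟨n, hn⟩ else false),
    decode_wf, fun i _ =>
      decode_ne_prop (w := fun n => if hn : n < m then v ⟨n, hn⟩ else false) i⟩
  left_inv := by
    rintro ⟨h, hwf, hnp⟩
    apply Subtype.ext
    show decodeHD m _ = h
    have hw : (fun n => if hn : n < m then toWord m h (↑(⟨n, hn⟩ : Fin m)) else false)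
        = toWord m h := by
      funext n
      by_cases hn : n < m
      · simp [hn]
      · simp only [dif_neg hn]
        unfold toWord
        rw [if_neg hn]
    rw [hw]
    exact congrArg HalfDiagram.mk (funext fun i => decode_toWord hwf hnp i)
  right_inv := by
    intro v
    funext i
    have hkey := toWord_decode (m := m)
      (fun n => if hn : n < m then v ⟨n, hn⟩ else false) i.2
    show toWord m _ ↑i = v i
    rw [hkey]
    simp

end Stmt17

theorem stmt17 (m : ℕ) (k V : Type) [Field k] [AddCommGroup V] [Module k V]
    (b : Module.Basis {h : HalfDiagram m // HWf m h ∧ ∀ i, i < m → h.dest i ≠ HDest.prop} k V) :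
    Module.finrank k V = 2 ^ m ∧
    Nat.card {h : HalfDiagram m // HWf m h ∧ ∀ i, i < m → h.dest i ≠ HDest.prop}
      = 2 ^ m := by
    classical
  have e := Stmt17.theEquiv m
  haveI : Fintype {h : HalfDiagram m // HWf m h ∧ ∀ i, i < m → h.dest i ≠ HDest.prop} :=
    Fintype.ofEquiv _ e.symm
  constructor
  · rw [Module.finrank_eq_card_basis b, Fintype.card_congr e]
    simp
  · rw [Nat.card_congr e]
    simp [Nat.card_eq_fintype_card]
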